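/- Let S be a finite set and f : 2^S → ℝ a normalized monotone submodular function. For each A ⊆ S define g_A : 2^S → ℝ by g_A(B) = min( f(A) · |A ∩ B| , f(A) ) + ∑_{k ∈ B \ A} f({k}). Then for every B ⊆ S, f(B) = min_{A ⊆ S} g_A(B); that is, f equals the pointwise minimum of the family { g_A : A ⊆ S }. -/

import Mathlib

/-- For a finite ground set `S` (modelled as a finite type `ι`) and a normalized
monotone submodular function `f`, with
`g_A(B) = min(f(A)·|A ∩ B|, f(A)) + ∑_{k ∈ B \ A} f({k})`,
`f` equals the pointwise minimum over `A ⊆ S` of the functions `g_A`. -/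
theorem f_eq_min_gA {ι : Type*} [Fintype ι] [DecidableEq ι]
    (f : Finset ι → ℝ)
    (hnorm : f ∅ = 0)
    (hmono : ∀ A B : Finset ι, A ⊆ B → f A ≤ f B)
    (hsub : ∀ A B : Finset ι, A ⊆ B → ∀ v ∉ B,
      f (insert v A) - f A ≥ f (insert v B) - f B) :
    ∀ B : Finset ι,
      f B = ⨅ A : Finset ι,
        (min (f A * ((A ∩ B).card : ℝ)) (f A) + ∑ k ∈ B \ A, f {k}) := by
  have hnonneg : ∀ A : Finset ι, 0 ≤ f A := by
    intro A
    have := hmono ∅ A (Finset.empty_subset A)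
    linarith
  -- marginal bound: f(insert v D) ≤ f D + f {v}
  have hmarg : ∀ (D : Finset ι) (v : ι), v ∉ D → f (insert v D) ≤ f D + f {v} := by
    intro D v hv
    have := hsub ∅ D (Finset.empty_subset D) v hv
    have e : f (insert v ∅) = f {v} := rfl
    linarith
  -- subadditivity over a disjoint union
  have hunion : ∀ (T C : Finset ι), Disjoint C T → f (C ∪ T) ≤ f C + ∑ k ∈ T, f {k} := by
    intro T
    induction T using Finset.induction_on with
    | empty => intro C _; simp
    | insert v T hv ih =>
      intro C hdisj
      have hdisj' : Disjoint C T := by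
        exact hdisj.mono_right (Finset.subset_insert v T)
      have hvC : v ∉ C ∪ T := by
        simp only [Finset.mem_union]
        rintro (h | h)
        · exact (Finset.disjoint_left.mp hdisj h) (Finset.mem_insert_self v T)
        · exact hv h
      have h1 : f (C ∪ insert v T) ≤ f (C ∪ T) + f {v} := by
        rw [Finset.union_insert]
        exact hmarg _ _ hvC
      have h2 := ih C hdisj'
      rw [Finset.sum_insert hv]
      linarith
  -- f B ≤ f C + ∑_{k ∈ B \ C} f {k} for C ⊆ B
  have hsubadd : ∀ (C B : Finset ι), C ⊆ B → f B ≤ f C + ∑ k ∈ B \ C, f {k} := by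
    intro C B hCB
    have := hunion (B \ C) C (Finset.disjoint_sdiff)
    rwa [Finset.union_sdiff_of_subset hCB] at this
  intro B
  -- lower bound for each A
  have hlb : ∀ A : Finset ι,
      f B ≤ min (f A * ((A ∩ B).card : ℝ)) (f A) + ∑ k ∈ B \ A, f {k} := by
    intro A
    have hBA : B \ A = B \ (A ∩ B) := by
      ext x; simp only [Finset.mem_sdiff, Finset.mem_inter]; tauto
    have hkey : f (A ∩ B) ≤ min (f A * ((A ∩ B).card : ℝ)) (f A) := by
      rcases (A ∩ B).eq_empty_or_nonempty with h | h
      · rw [h]; simp [hnorm]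
        exact hnonneg A
      · have hc : (1 : ℝ) ≤ ((A ∩ B).card : ℝ) := by
          exact_mod_cast Finset.one_le_card.mpr h
        have hfA : f (A ∩ B) ≤ f A := hmono _ _ (Finset.inter_subset_left)
        have : f A ≤ f A * ((A ∩ B).card : ℝ) := by
          nlinarith [hnonneg A]
        rw [min_eq_right this] at *
        exact hfA
    have := hsubadd (A ∩ B) B (Finset.inter_subset_right)
    rw [← hBA] at this
    linarith
  have hbdd : BddBelow (Set.range fun A : Finset ι =>
      min (f A * ((A ∩ B).card : ℝ)) (f A) + ∑ k ∈ B \ A, f {k}) := by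
    refine ⟨f B, ?_⟩
    rintro x ⟨A, rfl⟩
    exact hlb A
  apply le_antisymm
  · exact le_ciInf hlb
  · have h := ciInf_le hbdd B
    have hBB : min (f B * ((B ∩ B).card : ℝ)) (f B) + ∑ k ∈ B \ B, f {k} = f B := by
      rw [Finset.sdiff_self, Finset.sum_empty, Finset.inter_self, add_zero]
      rcases B.eq_empty_or_nonempty with h | h
      · simp [h, hnorm]
      · have hc : (1 : ℝ) ≤ (B.card : ℝ) := by
          exact_mod_cast Finset.one_le_card.mpr h
        have : f B ≤ f B * (B.card : ℝ) := by nlinarith [hnonneg B]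
        exact min_eq_right this
    rwa [hBB] at h
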